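/- No null Cartan curve c in Minkowski 4-space with k₂(s) ≠ 0 for all s (equivalently, with {c', c'', c⁽³⁾, c⁽⁴⁾} linearly independent) admits a Bertrand mate: if c̄(s̄) = c(s) + αW₁(s) is a null Cartan curve with W̄₁ = ±W₁, then α = 0 and c̄ coincides with c. -/

import Mathlib

noncomputable section

/-- Minkowski inner product on ℝ⁴ with signature (-,+,+,+). -/
def mink (x y : Fin 4 → ℝ) : ℝ := -(x 0 * y 0) + x 1 * y 1 + x 2 * y 2 + x 3 * y 3

lemma mink_smul_left (a : ℝ) (x y : Fin 4 → ℝ) : mink (a • x) y = a * mink x y := by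
  simp [mink]; ring

lemma mink_smul_right (a : ℝ) (x y : Fin 4 → ℝ) : mink x (a • y) = a * mink x y := by
  simp [mink]; ring

lemma mink_add_left (x y z : Fin 4 → ℝ) : mink (x + y) z = mink x z + mink y z := by
  simp [mink]; ring

lemma mink_add_right (x y z : Fin 4 → ℝ) : mink x (y + z) = mink x y + mink x z := by
  simp [mink]; ring

lemma mink_sub_left (x y z : Fin 4 → ℝ) : mink (x - y) z = mink x z - mink y z := by
  simp [mink]; ring

lemma mink_sub_right (x y z : Fin 4 → ℝ) : mink x (y - z) = mink x y - mink x z := by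
  simp [mink]; ring

lemma mink_neg_left (x y : Fin 4 → ℝ) : mink (-x) y = -mink x y := by
  simp [mink]; ring

lemma mink_zero_left (y : Fin 4 → ℝ) : mink 0 y = 0 := by simp [mink]

lemma mink_zero_right (x : Fin 4 → ℝ) : mink x 0 = 0 := by simp [mink]

lemma mink_comm (x y : Fin 4 → ℝ) : mink x y = mink y x := by simp [mink]; ring

/-- No null Cartan curve in `R⁴₁` with `k₂(s) ≠ 0` for all `s` admits a
Bertrand mate: if `c̄(s̄) = c(s) + α W₁(s)` is a null Cartan curve with `W̄₁ = ±W₁`,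
then `α = 0` and `c̄` coincides with `c`. -/
theorem stmt4 (c c' L N W₁ W₂ L' W₁' : ℝ → (Fin 4 → ℝ)) (k₁ k₂ : ℝ → ℝ)
    (α : ℝ) (φ : ℝ → ℝ)
    -- Cartan–Frenet equations of c:
    (hcL : ∀ s, deriv c s = L s)
    (hLfr : ∀ s, deriv L s = W₁ s)
    (hNfr : ∀ s, deriv N s = k₁ s • W₁ s + k₂ s • W₂ s)
    (hW₁fr : ∀ s, deriv W₁ s = -(k₁ s) • L s - N s)
    (hW₂fr : ∀ s, deriv W₂ s = -(k₂ s) • L s)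
    -- pseudo-orthonormality of the frame of c:
    (hLL : ∀ s, mink (L s) (L s) = 0) (hNN : ∀ s, mink (N s) (N s) = 0)
    (hLN : ∀ s, mink (L s) (N s) = 1)
    (hW₁W₁ : ∀ s, mink (W₁ s) (W₁ s) = 1) (hW₂W₂ : ∀ s, mink (W₂ s) (W₂ s) = 1)
    (hW₁W₂ : ∀ s, mink (W₁ s) (W₂ s) = 0)
    (hLW₁ : ∀ s, mink (L s) (W₁ s) = 0) (hLW₂ : ∀ s, mink (L s) (W₂ s) = 0)
    (hNW₁ : ∀ s, mink (N s) (W₁ s) = 0) (hNW₂ : ∀ s, mink (N s) (W₂ s) = 0)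
    -- {c',c'',c⁽³⁾,c⁽⁴⁾} linearly independent, equivalently k₂ never vanishes:
    (hk₂ : ∀ s, k₂ s ≠ 0)
    -- the candidate Bertrand mate:
    (hpair : ∀ s, c' (φ s) = c s + α • W₁ s)
    (hnormals : ∀ s, W₁' (φ s) = W₁ s ∨ W₁' (φ s) = -W₁ s)
    (hφ : Differentiable ℝ φ)
    (hmate : ∀ s, deriv (fun t => c' (φ t)) s = deriv φ s • L' (φ s))
    -- barred Frenet equation L̄' = W̄₁ together with the chain rule:
    (hmate2 : ∀ s, deriv (fun t => deriv φ t • L' (φ t)) s =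
      deriv (deriv φ) s • L' (φ s) + (deriv φ s) ^ 2 • W₁' (φ s))
    -- the mate's tangent L̄ is null and orthogonal to W̄₁:
    (hL'null : ∀ x, mink (L' x) (L' x) = 0)
    (hL'W₁' : ∀ x, mink (L' x) (W₁' x) = 0) :
    α = 0 ∧ ∀ s, c' (φ s) = c s := by
  -- differentiability of c, W₁, N (their prescribed derivatives are nonzero)
  have hdc : ∀ s, DifferentiableAt ℝ c s := by
    intro s
    by_contra h
    have h0 : deriv c s = 0 := deriv_zero_of_not_differentiableAt h
    have := hLN s
    rw [← hcL s, h0, mink_zero_left] at this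
    norm_num at this
  have hdW₁ : ∀ s, DifferentiableAt ℝ W₁ s := by
    intro s
    by_contra h
    have h0 : deriv W₁ s = 0 := deriv_zero_of_not_differentiableAt h
    have h1 := hW₁fr s
    rw [h0] at h1
    have h2 := congrArg (fun v => mink v (L s)) h1
    simp only [mink_zero_left, mink_sub_left, mink_smul_left, hLL s] at h2
    rw [mink_comm (N s) (L s), hLN s] at h2
    norm_num at h2
  have hdN : ∀ s, DifferentiableAt ℝ N s := by
    intro s
    by_contra h
    have h0 : deriv N s = 0 := deriv_zero_of_not_differentiableAt h
    have h1 := hNfr s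
    rw [h0] at h1
    have h2 := congrArg (fun v => mink v (W₂ s)) h1.symm
    simp only [mink_zero_left, mink_add_left, mink_smul_left, hW₁W₂ s, hW₂W₂ s] at h2
    exact hk₂ s (by linarith)
  -- the key pointwise identity
  have key : ∀ s, deriv φ s • L' (φ s) = L s + α • (-(k₁ s) • L s - N s) := by
    intro s
    have hfun : (fun t => c' (φ t)) = fun t => c t + α • W₁ t := funext hpair
    have h := hmate s
    rw [hfun, deriv_fun_add (g := fun t => α • W₁ t) (hdc s) ((hdW₁ s).const_smul α),
      deriv_fun_const_smul α (hdW₁ s), hcL s, hW₁fr s] at h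
    exact h.symm
  -- scalar consequences
  have eL : ∀ s, deriv φ s * mink (L' (φ s)) (L s) = -α := by
    intro s
    have h := congrArg (fun v => mink v (L s)) (key s)
    simp only [mink_smul_left, mink_add_left, mink_sub_left, hLL s] at h
    rw [mink_comm (N s) (L s), hLN s] at h
    linarith
  have eW₂ : ∀ s, deriv φ s * mink (L' (φ s)) (W₂ s) = 0 := by
    intro s
    have h := congrArg (fun v => mink v (W₂ s)) (key s)
    simp only [mink_smul_left, mink_add_left, mink_sub_left, hLW₂ s, hNW₂ s] at h
    linarith
  have enull : ∀ s, α * (1 - α * k₁ s) = 0 := by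
    intro s
    have h0 : mink (deriv φ s • L' (φ s)) (deriv φ s • L' (φ s)) = 0 := by
      rw [mink_smul_left, mink_smul_right, hL'null]; ring
    rw [key s] at h0
    simp only [mink_add_left, mink_add_right, mink_sub_left, mink_sub_right,
      mink_smul_left, mink_smul_right, hLL s, hNN s, hLN s] at h0
    rw [mink_comm (N s) (L s), hLN s] at h0
    nlinarith [h0]
  by_cases hα : α = 0
  · subst hα
    exact ⟨rfl, fun s => by simpa using hpair s⟩
  · exfalso
    have hk : ∀ s, α * k₁ s = 1 := by
      intro s
      have := enull s
      rcases mul_eq_zero.mp this with h | h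
      · exact absurd h hα
      · linarith
    have ha : ∀ s, deriv φ s ≠ 0 := by
      intro s h0
      have := eL s
      rw [h0] at this
      simp at this
      exact hα this
    have hXW₂ : ∀ s, mink (L' (φ s)) (W₂ s) = 0 := by
      intro s
      have := eW₂ s
      exact (mul_eq_zero.mp this).resolve_left (ha s)
    -- the function deriv φ t • L' (φ t) is just (-α) • N t
    have hfun2 : (fun t => deriv φ t • L' (φ t)) = fun t => (-α) • N t := by
      funext t
      rw [key t]
      funext i
      have hkt := hk t
      simp only [Pi.add_apply, Pi.smul_apply, Pi.sub_apply, Pi.neg_apply, smul_eq_mul]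
      linear_combination (-(L t i)) * hkt
    have h2 := hmate2 0
    rw [hfun2, deriv_fun_const_smul (-α) (hdN 0), hNfr 0] at h2
    have h3 := congrArg (fun v => mink v (W₂ 0)) h2
    simp only [mink_smul_left, mink_add_left, mink_add_right, mink_smul_right,
      hXW₂ 0, hW₁W₂ 0, hW₂W₂ 0] at h3
    have hw : mink (W₁' (φ 0)) (W₂ 0) = 0 := by
      rcases hnormals 0 with h | h
      · rw [h]; exact hW₁W₂ 0
      · rw [h, mink_neg_left, hW₁W₂ 0]; ring
    rw [hw] at h3
    have : α * k₂ 0 = 0 := by linarith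
    rcases mul_eq_zero.mp this with h | h
    · exact hα h
    · exact hk₂ 0 h
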